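/- Let k be a perfect field and R = k[X_1,…,X_m,Y,Z,T]/(G) an affine domain, G = vY + h − f(Z,T), where v = ∏ p_i^{s_i} is a prime factorization in k[X_1,…,X_m], with s_j = 1 for some j and p_j dividing h in k[X_1,…,X_m,Z,T]. If R is a regular ring, then k[Z,T]/(f(Z,T)) is a regular ring. -/

import Mathlib

set_option maxHeartbeats 1000000
set_option synthInstance.maxHeartbeats 1000000
noncomputable section
open MvPolynomial

def embXv (k : Type) [Field k] (m : ℕ) :
    MvPolynomial (Fin m) k →ₐ[k] MvPolynomial (Fin m ⊕ Fin 3) k :=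
  rename Sum.inl

def embHv (k : Type) [Field k] (m : ℕ) :
    MvPolynomial (Fin m ⊕ Fin 2) k →ₐ[k] MvPolynomial (Fin m ⊕ Fin 3) k :=
  rename (Sum.map id Fin.succ)

def embFv (k : Type) [Field k] (m : ℕ) :
    MvPolynomial (Fin 2) k →ₐ[k] MvPolynomial (Fin m ⊕ Fin 3) k :=
  rename (fun j => Sum.inr j.succ)

def Gpoly (k : Type) [Field k] (m : ℕ) (v : MvPolynomial (Fin m) k)
    (h : MvPolynomial (Fin m ⊕ Fin 2) k) (f : MvPolynomial (Fin 2) k) :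
    MvPolynomial (Fin m ⊕ Fin 3) k :=
  embXv k m v * MvPolynomial.X (Sum.inr 0) + embHv k m h - embFv k m f

def JacRegular (k : Type) [Field k] (m : ℕ) (v : MvPolynomial (Fin m) k)
    (h : MvPolynomial (Fin m ⊕ Fin 2) k) (f : MvPolynomial (Fin 2) k) : Prop :=
  Ideal.span ({Gpoly k m v h f} ∪
      Set.range fun i : Fin m ⊕ Fin 3 => pderiv i (Gpoly k m v h f)) = ⊤

def JacRegularf (k : Type) [Field k] (f : MvPolynomial (Fin 2) k) : Prop :=
  Ideal.span {f, pderiv 0 f, pderiv 1 f} = ⊤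

section retract
variable {k E : Type} [Field k] [Field E] [Algebra k E] {σ : Type}

def pih (π : E →ₗ[k] k) (g : MvPolynomial σ E) : MvPolynomial σ k :=
  AddMonoidAlgebra.ofCoeff (Finsupp.mapRange π (map_zero π) (AddMonoidAlgebra.coeff g))

lemma coeff_pih (π : E →ₗ[k] k) (g : MvPolynomial σ E) (d : σ →₀ ℕ) :
    coeff d (pih π g) = π (coeff d g) := rfl

lemma pih_add (π : E →ₗ[k] k) (a b : MvPolynomial σ E) :
    pih π (a + b) = pih π a + pih π b := by
  ext d; simp [coeff_pih, coeff_add]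

lemma pih_one (π : E →ₗ[k] k) (hπ : ∀ a : k, π (algebraMap k E a) = a) :
    pih π (1 : MvPolynomial σ E) = 1 := by
  classical
  ext d
  rw [coeff_pih]
  rw [coeff_one, coeff_one]
  split_ifs
  · have := hπ 1; simpa using this
  · simp

lemma pih_mul_X (π : E →ₗ[k] k) (g : MvPolynomial σ E) (i : σ) :
    pih π (g * X i) = pih π g * X i := by
  classical
  ext d
  rw [coeff_pih, coeff_mul_X', coeff_mul_X']
  split_ifs
  · rw [coeff_pih]
  · simp

lemma pih_mul_map (π : E →ₗ[k] k) (φ : MvPolynomial σ k) :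
    ∀ g : MvPolynomial σ E, pih π (g * map (algebraMap k E) φ) = pih π g * φ := by
  induction φ using MvPolynomial.induction_on with
  | C a =>
      intro g
      rw [map_C]
      ext d
      rw [coeff_pih, mul_comm, coeff_C_mul, mul_comm (pih π g), coeff_C_mul, coeff_pih]
      rw [← Algebra.smul_def, map_smul, smul_eq_mul]
  | add p q hp hq =>
      intro g
      rw [map_add, mul_add, pih_add, hp g, hq g, mul_add]
  | mul_X p i hp =>
      intro g
      rw [map_mul, map_X,
        show g * (map (algebraMap k E) p * X i) = (g * X i) * map (algebraMap k E) p by ring,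
        hp (g * X i), pih_mul_X, mul_assoc, mul_comm (X i) p]

end retract

lemma pd_rename_zero {R σ τ : Type*} [CommSemiring R] {f : σ → τ} {j : τ}
    (hj : ∀ i, f i ≠ j) (φ : MvPolynomial σ R) : pderiv j (rename f φ) = 0 := by
  classical
  apply pderiv_eq_zero_of_notMem_vars
  intro hm
  obtain ⟨i, -, hfi⟩ := mem_vars_rename f φ hm
  exact hj i hfi

lemma stmt9_aux (k : Type) [Field k] (m : ℕ)
    (v : MvPolynomial (Fin m) k) (h : MvPolynomial (Fin m ⊕ Fin 2) k)
    (f : MvPolynomial (Fin 2) k)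
    (E : Type) [Field E] [Algebra k E]
    (ρ0 : MvPolynomial (Fin m) k →ₐ[k] E)
    (pj wp : MvPolynomial (Fin m) k) (q : MvPolynomial (Fin m ⊕ Fin 2) k)
    (hvw : v = pj * wp)
    (hq : h = rename Sum.inl pj * q)
    (hρpj : ρ0 pj = 0) (hρw : ρ0 wp ≠ 0)
    (hregE : Ideal.span ({Gpoly k m v h f} ∪
      Set.range fun i : Fin m ⊕ Fin 3 => pderiv i (Gpoly k m v h f)) = ⊤) :
    Ideal.span {f, pderiv 0 f, pderiv 1 f} = ⊤ := by
  classical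
  set cι : k →+* MvPolynomial (Fin 2) E :=
    (C : E →+* MvPolynomial (Fin 2) E).comp (algebraMap k E) with hcι
  set ρ : MvPolynomial (Fin m) k →+* MvPolynomial (Fin 2) E :=
    (C : E →+* MvPolynomial (Fin 2) E).comp ρ0.toRingHom with hρ
  have hρpj' : ρ pj = 0 := by simp [hρ, RingHom.comp_apply, hρpj]
  set A : E := ρ0 wp with hA
  have hA0 : A ≠ 0 := hρw
  have hρw' : ρ wp = C A := rfl
  -- evaluation maps
  set g0 : Fin m ⊕ Fin 2 → MvPolynomial (Fin 2) E :=
    Sum.elim (fun i => ρ (X i)) ![X 0, X 1] with hg0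
  set ψ0 : MvPolynomial (Fin m ⊕ Fin 2) k →+* MvPolynomial (Fin 2) E :=
    eval₂Hom cι g0 with hψ0
  set Q : MvPolynomial (Fin 2) E := ψ0 q with hQ
  set yval : MvPolynomial (Fin 2) E := -(C A⁻¹ * Q) with hyval
  set g : Fin m ⊕ Fin 3 → MvPolynomial (Fin 2) E :=
    Sum.elim (fun i => ρ (X i)) ![yval, X 0, X 1] with hg
  set ψ : MvPolynomial (Fin m ⊕ Fin 3) k →+* MvPolynomial (Fin 2) E := eval₂Hom cι g with hψ
  have hCA1 : (C A : MvPolynomial (Fin 2) E) * C A⁻¹ = 1 := by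
    rw [← C_mul, mul_inv_cancel₀ hA0]; exact C_1
  have hCAy : C A * yval = -Q := by
    rw [hyval]; linear_combination (-Q) * hCA1
  have hCρ0 : ∀ a : k, ρ0 (C a) = algebraMap k E a := by
    intro a
    rw [← MvPolynomial.algebraMap_eq]
    exact ρ0.commutes a
  -- composition identities
  have hXv : ∀ r : MvPolynomial (Fin m) k, ψ (rename Sum.inl r) = ρ r := by
    intro r
    have hc : ψ.comp (rename (Sum.inl : Fin m → Fin m ⊕ Fin 3)).toRingHom = ρ := by
      apply MvPolynomial.ringHom_ext
      · intro a
        simp only [RingHom.comp_apply, AlgHom.toRingHom_eq_coe, AlgHom.coe_toRingHom,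
          rename_C, hψ, eval₂Hom_C, hρ, hcι, AlgHom.coe_ringHom_mk, hCρ0 a]
      · intro i
        simp only [RingHom.comp_apply, AlgHom.toRingHom_eq_coe, AlgHom.coe_toRingHom,
          rename_X, hψ, eval₂Hom_X']
        rfl
    exact DFunLike.congr_fun hc r
  have hXv0 : ∀ r : MvPolynomial (Fin m) k, ψ0 (rename Sum.inl r) = ρ r := by
    intro r
    have hc : ψ0.comp (rename (Sum.inl : Fin m → Fin m ⊕ Fin 2)).toRingHom = ρ := by
      apply MvPolynomial.ringHom_ext
      · intro a
        simp only [RingHom.comp_apply, AlgHom.toRingHom_eq_coe, AlgHom.coe_toRingHom,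
          rename_C, hψ0, eval₂Hom_C, hρ, hcι, AlgHom.coe_ringHom_mk, hCρ0 a]
      · intro i
        simp only [RingHom.comp_apply, AlgHom.toRingHom_eq_coe, AlgHom.coe_toRingHom,
          rename_X, hψ0, eval₂Hom_X']
        rfl
    exact DFunLike.congr_fun hc r
  have hHv : ∀ r : MvPolynomial (Fin m ⊕ Fin 2) k,
      ψ (rename (Sum.map id Fin.succ) r) = ψ0 r := by
    intro r
    have hcomp : g ∘ Sum.map id Fin.succ = g0 := by
      funext x
      rcases x with i | b
      · rfl
      · fin_cases b <;> rfl
    calc ψ (rename (Sum.map id Fin.succ) r) = eval₂ cι (g ∘ Sum.map id Fin.succ) r :=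
          eval₂_rename _ _ _ _
      _ = ψ0 r := by rw [hcomp]; rfl
  have hFv : ∀ r : MvPolynomial (Fin 2) k,
      ψ (rename (fun b : Fin 2 => (Sum.inr b.succ : Fin m ⊕ Fin 3)) r)
        = map (algebraMap k E) r := by
    intro r
    have hcomp : g ∘ (fun b : Fin 2 => (Sum.inr b.succ : Fin m ⊕ Fin 3)) = X := by
      funext b
      fin_cases b <;> rfl
    calc ψ (rename (fun b : Fin 2 => (Sum.inr b.succ : Fin m ⊕ Fin 3)) r)
        = eval₂ cι (g ∘ fun b : Fin 2 => (Sum.inr b.succ : Fin m ⊕ Fin 3)) r :=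
          eval₂_rename _ _ _ _
      _ = map (algebraMap k E) r := by
          rw [hcomp]; induction r using MvPolynomial.induction_on <;> simp_all
  -- index facts
  have hne0 : ∀ i : Fin m, Sum.inl i ≠ (Sum.inr 0 : Fin m ⊕ Fin 3) := by simp
  have hne1 : ∀ i : Fin m, Sum.inl i ≠ (Sum.inr 1 : Fin m ⊕ Fin 3) := by simp
  have hne2 : ∀ i : Fin m, Sum.inl i ≠ (Sum.inr 2 : Fin m ⊕ Fin 3) := by simp
  have hH0 : ∀ x : Fin m ⊕ Fin 2, Sum.map id Fin.succ x ≠ (Sum.inr 0 : Fin m ⊕ Fin 3) := by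
    rintro (i | b) <;> simp [Fin.succ_ne_zero]
  have hF0 : ∀ b : Fin 2, (Sum.inr b.succ : Fin m ⊕ Fin 3) ≠ Sum.inr 0 := by
    intro b; simp [Fin.succ_ne_zero]
  have hFli : ∀ (i : Fin m) (b : Fin 2), (Sum.inr b.succ : Fin m ⊕ Fin 3) ≠ Sum.inl i := by
    intro i b; simp
  have hinjH : Function.Injective (Sum.map (id : Fin m → Fin m) (Fin.succ : Fin 2 → Fin 3)) :=
    Function.Injective.sumMap Function.injective_id (Fin.succ_injective _)
  have hinjF : Function.Injective (fun b : Fin 2 => (Sum.inr b.succ : Fin m ⊕ Fin 3)) :=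
    fun a b hab => (Fin.succ_injective _) (Sum.inr.inj hab)
  -- derivative computations in the polynomial ring
  have dY : pderiv (Sum.inr 0) (Gpoly k m v h f) = rename Sum.inl v := by
    simp only [Gpoly, embXv, embHv, embFv, map_sub, map_add, pderiv_mul,
      pd_rename_zero hne0, pd_rename_zero hH0, pd_rename_zero hF0, pderiv_X_self]
    all_goals ring
  have dX : ∀ i : Fin m, pderiv (Sum.inl i) (Gpoly k m v h f)
      = rename Sum.inl (pderiv i v) * X (Sum.inr 0)
        + rename (Sum.map id Fin.succ) (pderiv (Sum.inl i) h) := by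
    intro i
    have e1 : pderiv (Sum.inl i) (rename (Sum.inl : Fin m → Fin m ⊕ Fin 3) v)
        = rename Sum.inl (pderiv i v) := pderiv_rename Sum.inl_injective i v
    have e2 : pderiv (Sum.inl i) (rename (Sum.map id Fin.succ) h)
        = rename (Sum.map id Fin.succ) (pderiv (Sum.inl i) h) :=
      pderiv_rename hinjH (Sum.inl i) h
    simp only [Gpoly, embXv, embHv, embFv, map_sub, map_add, pderiv_mul, e1, e2,
      pd_rename_zero (hFli i), pderiv_X_of_ne (Ne.symm (hne0 i))]
    all_goals ring
  have dZ : pderiv (Sum.inr 1) (Gpoly k m v h f)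
      = rename (Sum.map id Fin.succ) (pderiv (Sum.inr 0) h)
        - rename (fun b : Fin 2 => (Sum.inr b.succ : Fin m ⊕ Fin 3)) (pderiv 0 f) := by
    have e1 : pderiv (Sum.inr 1) (rename (Sum.map id Fin.succ) h)
        = rename (Sum.map id Fin.succ) (pderiv (Sum.inr 0) h) :=
      pderiv_rename hinjH (Sum.inr 0) h
    have e2 : pderiv (Sum.inr 1)
          (rename (fun b : Fin 2 => (Sum.inr b.succ : Fin m ⊕ Fin 3)) f)
        = rename (fun b : Fin 2 => (Sum.inr b.succ : Fin m ⊕ Fin 3)) (pderiv 0 f) :=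
      pderiv_rename hinjF 0 f
    simp only [Gpoly, embXv, embHv, embFv, map_sub, map_add, pderiv_mul, e1, e2,
      pd_rename_zero hne1,
      pderiv_X_of_ne (show (Sum.inr 0 : Fin m ⊕ Fin 3) ≠ Sum.inr 1 by simp)]
    all_goals ring
  have dT : pderiv (Sum.inr 2) (Gpoly k m v h f)
      = rename (Sum.map id Fin.succ) (pderiv (Sum.inr 1) h)
        - rename (fun b : Fin 2 => (Sum.inr b.succ : Fin m ⊕ Fin 3)) (pderiv 1 f) := by
    have e1 : pderiv (Sum.inr 2) (rename (Sum.map id Fin.succ) h)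
        = rename (Sum.map id Fin.succ) (pderiv (Sum.inr 1) h) :=
      pderiv_rename hinjH (Sum.inr 1) h
    have e2 : pderiv (Sum.inr 2)
          (rename (fun b : Fin 2 => (Sum.inr b.succ : Fin m ⊕ Fin 3)) f)
        = rename (fun b : Fin 2 => (Sum.inr b.succ : Fin m ⊕ Fin 3)) (pderiv 1 f) :=
      pderiv_rename hinjF 1 f
    simp only [Gpoly, embXv, embHv, embFv, map_sub, map_add, pderiv_mul, e1, e2,
      pd_rename_zero hne2,
      pderiv_X_of_ne (show (Sum.inr 0 : Fin m ⊕ Fin 3) ≠ Sum.inr 2 by simp)]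
    all_goals ring
  -- the ideal downstairs
  set J : Ideal (MvPolynomial (Fin 2) E) :=
    Ideal.span {map (algebraMap k E) f, map (algebraMap k E) (pderiv 0 f),
      map (algebraMap k E) (pderiv 1 f)} with hJ
  have hfJ : map (algebraMap k E) f ∈ J := Ideal.subset_span (by simp)
  have hf0J : map (algebraMap k E) (pderiv 0 f) ∈ J := Ideal.subset_span (by simp)
  have hf1J : map (algebraMap k E) (pderiv 1 f) ∈ J := Ideal.subset_span (by simp)
  -- images of the generators
  have hψX0 : ψ (X (Sum.inr 0)) = yval := by rw [hψ, eval₂Hom_X']; rfl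
  have hψh : ψ0 h = 0 := by
    rw [hq, map_mul, hXv0, hρpj', zero_mul]
  have hψG : ψ (Gpoly k m v h f) = -(map (algebraMap k E) f) := by
    simp only [Gpoly, embXv, embHv, embFv, map_sub, map_add, map_mul, hψX0]
    rw [hXv, hHv, hFv, hψh, hvw, map_mul, hρpj']
    ring
  have hψdY : ψ (pderiv (Sum.inr 0) (Gpoly k m v h f)) = 0 := by
    rw [dY, hXv, hvw, map_mul, hρpj']
    ring
  have hψdX : ∀ i : Fin m, ψ (pderiv (Sum.inl i) (Gpoly k m v h f)) = 0 := by
    intro i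
    have hdh : pderiv (Sum.inl i) h
        = rename Sum.inl (pderiv i pj) * q + rename Sum.inl pj * pderiv (Sum.inl i) q := by
      rw [hq, pderiv_mul, pderiv_rename Sum.inl_injective]
    have hdv : pderiv i v = pderiv i pj * wp + pj * pderiv i wp := by
      rw [hvw, pderiv_mul]
    rw [dX i, map_add, map_mul, hXv, hψX0, hHv, hdh, map_add, map_mul, map_mul,
      hXv0, hXv0, hρpj', hdv, map_add, map_mul, map_mul, hρpj', hρw', ← hQ]
    linear_combination (ρ (pderiv i pj)) * hCAy
  have hψdZ : ψ (pderiv (Sum.inr 1) (Gpoly k m v h f))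
      = -(map (algebraMap k E) (pderiv 0 f)) := by
    have hdh : pderiv (Sum.inr 0) h = rename Sum.inl pj * pderiv (Sum.inr 0) q := by
      rw [hq, pderiv_mul, pd_rename_zero (by simp) pj, zero_mul, zero_add]
    rw [dZ, map_sub, hHv, hFv, hdh, map_mul, hXv0, hρpj']
    ring
  have hψdT : ψ (pderiv (Sum.inr 2) (Gpoly k m v h f))
      = -(map (algebraMap k E) (pderiv 1 f)) := by
    have hdh : pderiv (Sum.inr 1) h = rename Sum.inl pj * pderiv (Sum.inr 1) q := by
      rw [hq, pderiv_mul, pd_rename_zero (by simp) pj, zero_mul, zero_add]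
    rw [dT, map_sub, hHv, hFv, hdh, map_mul, hXv0, hρpj']
    ring
  -- 1 lands in J
  have hspan : Ideal.span ({Gpoly k m v h f} ∪
      Set.range fun i : Fin m ⊕ Fin 3 => pderiv i (Gpoly k m v h f)) ≤ Ideal.comap ψ J := by
    rw [Ideal.span_le]
    rintro x (rfl | ⟨i, rfl⟩)
    · show ψ (Gpoly k m v h f) ∈ J
      rw [hψG]
      exact J.neg_mem hfJ
    · rcases i with i | b
      · show ψ (pderiv (Sum.inl i) (Gpoly k m v h f)) ∈ J
        rw [hψdX i]
        exact J.zero_mem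
      · fin_cases b
        · show ψ (pderiv (Sum.inr 0) (Gpoly k m v h f)) ∈ J
          rw [hψdY]
          exact J.zero_mem
        · show ψ (pderiv (Sum.inr 1) (Gpoly k m v h f)) ∈ J
          rw [hψdZ]
          exact J.neg_mem hf0J
        · show ψ (pderiv (Sum.inr 2) (Gpoly k m v h f)) ∈ J
          rw [hψdT]
          exact J.neg_mem hf1J
  have h1J : (1 : MvPolynomial (Fin 2) E) ∈ J := by
    have hc : Ideal.comap ψ J = ⊤ := top_le_iff.mp (hregE ▸ hspan)
    have h1 : (1 : MvPolynomial (Fin m ⊕ Fin 3) k) ∈ Ideal.comap ψ J := hc ▸ Submodule.mem_top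
    simpa using h1
  -- retract back to k
  have hι : Function.Injective (Algebra.linearMap k E) := by
    intro a b hab
    exact (algebraMap k E).injective hab
  obtain ⟨π, hπ⟩ := (Algebra.linearMap k E).exists_leftInverse_of_injective
    (LinearMap.ker_eq_bot.mpr hι)
  have hπa : ∀ a : k, π (algebraMap k E a) = a := by
    intro a
    have := LinearMap.congr_fun hπ a
    simpa using this
  obtain ⟨r0, z0, hz0, hrep0⟩ := Ideal.mem_span_insert.mp h1J
  obtain ⟨r1, z1, hz1, hrep1⟩ := Ideal.mem_span_insert.mp hz0
  obtain ⟨r2, hrep2⟩ := Ideal.mem_span_singleton'.mp hz1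
  rw [Ideal.eq_top_iff_one]
  have key : (1 : MvPolynomial (Fin 2) k)
      = pih π r0 * f + (pih π r1 * pderiv 0 f + pih π r2 * pderiv 1 f) := by
    have hone : (1 : MvPolynomial (Fin 2) E)
        = r0 * map (algebraMap k E) f
          + (r1 * map (algebraMap k E) (pderiv 0 f) + r2 * map (algebraMap k E) (pderiv 1 f)) := by
      rw [hrep0, hrep1, ← hrep2]
    calc (1 : MvPolynomial (Fin 2) k) = pih π 1 := (pih_one π hπa).symm
      _ = pih π (r0 * map (algebraMap k E) f
          + (r1 * map (algebraMap k E) (pderiv 0 f)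
            + r2 * map (algebraMap k E) (pderiv 1 f))) := by rw [← hone]
      _ = pih π r0 * f + (pih π r1 * pderiv 0 f + pih π r2 * pderiv 1 f) := by
          rw [pih_add, pih_add, pih_mul_map, pih_mul_map, pih_mul_map]
  rw [key]
  refine Ideal.add_mem _ (Ideal.mul_mem_left _ _ (Ideal.subset_span (by simp)))
    (Ideal.add_mem _ (Ideal.mul_mem_left _ _ (Ideal.subset_span (by simp)))
      (Ideal.mul_mem_left _ _ (Ideal.subset_span (by simp))))

/-- Lemma 3.9, case (I). If `v = ∏ pᵢ^{sᵢ}` with `s_j = 1` and `p_j ∣ h`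
for some `j`, and `R = k[X_1,…,X_m,Y,Z,T]/(G)` is regular, then `k[Z,T]/(f)` is regular. -/
theorem stmt9 (k : Type) [Field k] [PerfectField k] (m : ℕ)
    (v : MvPolynomial (Fin m) k) (h : MvPolynomial (Fin m ⊕ Fin 2) k)
    (f : MvPolynomial (Fin 2) k)
    (hdom : (Ideal.span {Gpoly k m v h f}).IsPrime)
    (n : ℕ) (p : Fin n → MvPolynomial (Fin m) k) (s : Fin n → ℕ)
    (hprime : ∀ i, Prime (p i)) (hs : ∀ i, 0 < s i)
    (hdist : ∀ i j, i ≠ j → ¬ Associated (p i) (p j))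
    (hfact : v = ∏ i, p i ^ s i)
    (j : Fin n) (hsj : s j = 1)
    (hdvd : (rename (Sum.inl : Fin m → Fin m ⊕ Fin 2) (p j)) ∣ h)
    (hreg : JacRegular k m v h f) :
    JacRegularf k f := by
  classical
  have hregE : Ideal.span ({Gpoly k m v h f} ∪
      Set.range fun i : Fin m ⊕ Fin 3 => pderiv i (Gpoly k m v h f)) = ⊤ := hreg
  have hvw : v = p j * (∏ i ∈ Finset.univ.erase j, p i ^ s i) := by
    rw [hfact, ← Finset.mul_prod_erase Finset.univ _ (Finset.mem_univ j), hsj, pow_one]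
  obtain ⟨q, hq⟩ := hdvd
  have hnd : ¬ p j ∣ (∏ i ∈ Finset.univ.erase j, p i ^ s i) := by
    intro hd
    obtain ⟨i, hi, hdi⟩ := ((hprime j).dvd_finset_prod_iff _).mp hd
    have h1 : p j ∣ p i := (hprime j).dvd_of_dvd_pow hdi
    exact hdist j i (fun hji => (Finset.mem_erase.mp hi).1 hji.symm)
      ((hprime j).associated_of_dvd (hprime i) h1)
  haveI hIp : (Ideal.span {p j} : Ideal (MvPolynomial (Fin m) k)).IsPrime :=
    (Ideal.span_singleton_prime (hprime j).ne_zero).mpr (hprime j)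
  letI D := MvPolynomial (Fin m) k ⧸ (Ideal.span {p j} : Ideal (MvPolynomial (Fin m) k))
  letI E := FractionRing D
  let dq : MvPolynomial (Fin m) k →+* D := Ideal.Quotient.mk _
  let ρr : MvPolynomial (Fin m) k →+* E := (algebraMap D E).comp dq
  letI : Algebra k E := (ρr.comp (C : k →+* MvPolynomial (Fin m) k)).toAlgebra
  let ρ0 : MvPolynomial (Fin m) k →ₐ[k] E :=
    { toRingHom := ρr, commutes' := fun a => rfl }
  have hρpj : ρ0 (p j) = 0 := by
    have hz : dq (p j) = 0 := Ideal.Quotient.eq_zero_iff_mem.mpr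
      (Ideal.subset_span (Set.mem_singleton _))
    show (algebraMap D E) (dq (p j)) = 0
    rw [hz, map_zero]
  have hρw : ρ0 (∏ i ∈ Finset.univ.erase j, p i ^ s i) ≠ 0 := by
    intro h0
    have h1 : dq (∏ i ∈ Finset.univ.erase j, p i ^ s i) = 0 :=
      IsFractionRing.injective D E
        (show (algebraMap D E) _ = (algebraMap D E) 0 by rw [map_zero]; exact h0)
    exact hnd (Ideal.mem_span_singleton.mp (Ideal.Quotient.eq_zero_iff_mem.mp h1))
  exact stmt9_aux k m v h f E ρ0 (p j) _ q hvw hq hρpj hρw hregE
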